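/- arXiv:1710.01924 — 3 statements merged into one kernel-verified Lean document; each statement's English description precedes it below -/
import Mathlib

section
/- Let $M$ be a rank-$r$ sparse paving matroid on ground set $E$, and suppose there are pairwise disjoint sets $X_1, X_2, X_3, X_4, Y, Z_1, Z_2 \subseteq E$ with $|X_i| = 2$ for each $i$ and $|Y \cup Z_1 \cup Z_2| = r-4$, such that, setting $A = X_1 \cup Y \cup Z_1 \cup Z_2$, $B = X_2 \cup Y \cup Z_1 \cup Z_2$, $C = X_3 \cup Y \cup Z_1$, $D = X_4 \cup Y \cup Z_2$, each of $A \cup B$, $A \cup C$, $A \cup D$, $B \cup C$, $B \cup D$ is a circuit-hyperplane of $M$ and $C \cup D$ is a basis. Then $A, B, C, D$ violate Ingleton's inequality in $M$. -/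
open Set

/-- The (ℕ-valued) rank of a set `X` in a matroid `M`: the largest size of an independent
subset of `X`. -/
noncomputable def Matroid.rankN {α : Type*} (M : Matroid α) (X : Set α) : ℕ :=
  sSup {n : ℕ | ∃ I, M.Indep I ∧ I ⊆ X ∧ I.ncard = n}

/-- A circuit of a matroid: a minimal dependent set. -/
def Matroid.IsCircuit' {α : Type*} (M : Matroid α) (C : Set α) : Prop :=
  C ⊆ M.E ∧ ¬ M.Indep C ∧ ∀ D : Set α, D ⊂ C → M.Indep D

/-- A hyperplane of a matroid: a maximal nonspanning subset of the ground set. -/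
def Matroid.IsHyperplane' {α : Type*} (M : Matroid α) (H : Set α) : Prop :=
  H ⊆ M.E ∧ ¬ M.Spanning H ∧ ∀ X : Set α, H ⊂ X → X ⊆ M.E → M.Spanning X

/-- A circuit-hyperplane: a set that is simultaneously a circuit and a hyperplane. -/
def Matroid.IsCircuitHyperplane {α : Type*} (M : Matroid α) (H : Set α) : Prop :=
  M.IsCircuit' H ∧ M.IsHyperplane' H

/-- A paving matroid: every circuit is spanning. -/
def Matroid.IsPaving {α : Type*} (M : Matroid α) : Prop :=
  ∀ C, M.IsCircuit' C → M.Spanning C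

/-- A sparse paving matroid: both `M` and its dual are paving. -/
def Matroid.IsSparsePaving {α : Type*} (M : Matroid α) : Prop :=
  M.IsPaving ∧ M✶.IsPaving

/-- Ingleton's inequality holds for the quadruple `(A,B,C,D)` in `M`. -/
def Matroid.IngletonQuad {α : Type*} (M : Matroid α) (A B C D : Set α) : Prop :=
  M.rankN A + M.rankN B + M.rankN (A ∪ B ∪ C) + M.rankN (A ∪ B ∪ D) + M.rankN (C ∪ D)
    ≤ M.rankN (A ∪ B) + M.rankN (A ∪ C) + M.rankN (A ∪ D)
        + M.rankN (B ∪ C) + M.rankN (B ∪ D)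

/-- An Ingleton matroid: every quadruple of subsets of the ground set satisfies
Ingleton's inequality. -/
def Matroid.IsIngleton {α : Type*} (M : Matroid α) : Prop :=
  ∀ A B C D : Set α, A ⊆ M.E → B ⊆ M.E → C ⊆ M.E → D ⊆ M.E → M.IngletonQuad A B C D

/-- A nonbasis of a rank-`r` matroid: an `r`-element subset of the ground set that is
not a basis. -/
def Matroid.IsNonbasis {α : Type*} (M : Matroid α) (r : ℕ) (X : Set α) : Prop :=
  X ⊆ M.E ∧ X.ncard = r ∧ ¬ M.IsBase X

/-- A matroid is representable over `ℝ` if there is an assignment of real column vectors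
to the ground set under which independence coincides with linear independence. -/
def Matroid.RealRepresentable {α : Type*} (M : Matroid α) : Prop :=
  ∃ (d : ℕ) (v : α → (Fin d → ℝ)),
    ∀ I : Set α, I ⊆ M.E → (M.Indep I ↔ LinearIndependent ℝ (fun x : I => v x))

section Aux

variable {α : Type*} {M : Matroid α}

lemma rankN_eq_of_forall {X : Set α} {n : ℕ}
    (hmem : ∃ I, M.Indep I ∧ I ⊆ X ∧ I.ncard = n)
    (hub : ∀ I, M.Indep I → I ⊆ X → I.ncard ≤ n) : M.rankN X = n := by
  have hbdd : ∀ m ∈ {k : ℕ | ∃ I, M.Indep I ∧ I ⊆ X ∧ I.ncard = k}, m ≤ n := by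
    rintro m ⟨I, hI, hIX, rfl⟩; exact hub I hI hIX
  exact le_antisymm (csSup_le ⟨n, hmem⟩ hbdd) (le_csSup ⟨n, hbdd⟩ hmem)

lemma rankN_eq_ncard_of_indep {I : Set α} (hI : M.Indep I) (hfin : I.Finite) :
    M.rankN I = I.ncard :=
  rankN_eq_of_forall ⟨I, hI, Subset.rfl, rfl⟩
    (fun J _ hJI => Set.ncard_le_ncard hJI hfin)

lemma rankN_eq_of_spanning [M.Finite] {r : ℕ} (hr : ∀ B, M.IsBase B → B.ncard = r)
    {S : Set α} (hS : M.Spanning S) : M.rankN S = r := by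
  obtain ⟨B, hB, hBS⟩ := hS.exists_isBase_subset
  refine rankN_eq_of_forall ⟨B, hB.indep, hBS, hr B hB⟩ ?_
  intro I hI _
  obtain ⟨B', hB', hIB'⟩ := Matroid.Indep.exists_isBase_superset hI
  rw [← hr B' hB']
  exact Set.ncard_le_ncard hIB' (M.ground_finite.subset hB'.subset_ground)

lemma rankN_eq_of_circuit {H : Set α} (hH : M.IsCircuit' H) (hfin : H.Finite)
    (hne : H.Nonempty) : M.rankN H = H.ncard - 1 := by
  obtain ⟨e, he⟩ := hne
  refine rankN_eq_of_forall ⟨H \ {e}, hH.2.2 _ (Set.sdiff_singleton_ssubset.2 he),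
    Set.diff_subset, Set.ncard_diff_singleton_of_mem he⟩ ?_
  intro I hI hIH
  have hne' : I ≠ H := fun h => hH.2.1 (h ▸ hI)
  have := Set.ncard_lt_ncard (ssubset_of_subset_of_ne hIH hne') hfin
  omega

end Aux


set_option maxHeartbeats 1000000 in
/-- In a rank-`r` sparse paving matroid, a configuration of pairwise disjoint sets
`X₁,X₂,X₃,X₄,Y,Z₁,Z₂` with `|Xᵢ| = 2`, `|Y ∪ Z₁ ∪ Z₂| = r - 4`, with the five indicated
unions circuit-hyperplanes and `C ∪ D` a basis, yields a violation of Ingleton's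
inequality by `A,B,C,D`. -/
theorem ingleton_violation_of_configuration {α : Type*}
    (M : Matroid α) [M.Finite] (r : ℕ) (hsp : M.IsSparsePaving)
    (hr : ∀ B, M.IsBase B → B.ncard = r)
    (X₁ X₂ X₃ X₄ Y Z₁ Z₂ : Set α)
    (hsub : X₁ ∪ X₂ ∪ X₃ ∪ X₄ ∪ Y ∪ Z₁ ∪ Z₂ ⊆ M.E)
    (hdisj : ([X₁, X₂, X₃, X₄, Y, Z₁, Z₂] : List (Set α)).Pairwise Disjoint)
    (hX₁ : X₁.ncard = 2) (hX₂ : X₂.ncard = 2) (hX₃ : X₃.ncard = 2) (hX₄ : X₄.ncard = 2)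
    (hYZ : (Y ∪ Z₁ ∪ Z₂).ncard + 4 = r)
    (A B C D : Set α)
    (hA : A = X₁ ∪ Y ∪ Z₁ ∪ Z₂) (hB : B = X₂ ∪ Y ∪ Z₁ ∪ Z₂)
    (hC : C = X₃ ∪ Y ∪ Z₁) (hD : D = X₄ ∪ Y ∪ Z₂)
    (hAB : M.IsCircuitHyperplane (A ∪ B)) (hAC : M.IsCircuitHyperplane (A ∪ C))
    (hAD : M.IsCircuitHyperplane (A ∪ D)) (hBC : M.IsCircuitHyperplane (B ∪ C))
    (hBD : M.IsCircuitHyperplane (B ∪ D)) (hCD : M.IsBase (C ∪ D)) :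
    ¬ M.IngletonQuad A B C D := by
  -- basic finiteness
  have hE : M.E.Finite := M.ground_finite
  simp only [List.pairwise_cons, List.mem_cons, List.not_mem_nil, List.Pairwise.nil,
    forall_eq_or_imp, forall_eq, or_false, List.mem_singleton] at hdisj
  obtain ⟨⟨d12, d13, d14, d1Y, d1Z1, d1Z2⟩, ⟨d23, d24, d2Y, d2Z1, d2Z2⟩,
    ⟨d34, d3Y, d3Z1, d3Z2⟩, ⟨d4Y, d4Z1, d4Z2⟩, ⟨dYZ1, dYZ2⟩, dZ12, -⟩ := hdisj
  set W : Set α := Y ∪ Z₁ ∪ Z₂ with hW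
  have hWfin : W.Finite := hE.subset (fun x hx => hsub (by simp [hW] at hx ⊢; tauto))
  have hfin : ∀ S ∈ ({X₁, X₂, X₃, X₄} : Set (Set α)), S.Finite := by
    rintro S hS
    refine hE.subset (fun x hx => hsub ?_)
    simp at hS
    rcases hS with rfl | rfl | rfl | rfl <;> simp [hx]
  have h1f : X₁.Finite := hfin X₁ (by simp)
  have h2f : X₂.Finite := hfin X₂ (by simp)
  have h3f : X₃.Finite := hfin X₃ (by simp)
  have h4f : X₄.Finite := hfin X₄ (by simp)
  -- set shapes
  have hAeq : A = X₁ ∪ W := by rw [hA, hW]; ac_rfl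
  have hBeq : B = X₂ ∪ W := by rw [hB, hW]; ac_rfl
  have hABeq : A ∪ B = (X₁ ∪ X₂) ∪ W := by rw [hAeq, hBeq]; ext x; simp; tauto
  have hACeq : A ∪ C = (X₁ ∪ X₃) ∪ W := by
    rw [hAeq, hC, hW]; ext x; simp; tauto
  have hADeq : A ∪ D = (X₁ ∪ X₄) ∪ W := by
    rw [hAeq, hD, hW]; ext x; simp; tauto
  have hBCeq : B ∪ C = (X₂ ∪ X₃) ∪ W := by
    rw [hBeq, hC, hW]; ext x; simp; tauto
  have hBDeq : B ∪ D = (X₂ ∪ X₄) ∪ W := by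
    rw [hBeq, hD, hW]; ext x; simp; tauto
  have hCDeq : C ∪ D = (X₃ ∪ X₄) ∪ W := by
    rw [hC, hD, hW]; ext x; simp; tauto
  -- disjointness of pairs with W
  have dW : ∀ {S : Set α}, Disjoint S Y → Disjoint S Z₁ → Disjoint S Z₂ → Disjoint S W := by
    intro S h1 h2 h3; rw [hW]
    exact Disjoint.union_right (Disjoint.union_right h1 h2) h3
  -- cardinalities of pair unions
  have ncardP : ∀ (S T : Set α), S.Finite → T.Finite → Disjoint S T →
      S.ncard = 2 → T.ncard = 2 → Disjoint S W → Disjoint T W →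
      ((S ∪ T) ∪ W).ncard = W.ncard + 4 := by
    intro S T hSf hTf hST hS2 hT2 hSW hTW
    rw [Set.ncard_union_eq (Disjoint.union_left hSW hTW) (hSf.union hTf) hWfin,
      Set.ncard_union_eq hST hSf hTf, hS2, hT2]
    omega
  have nAB : (A ∪ B).ncard = W.ncard + 4 := by
    rw [hABeq]; exact ncardP _ _ h1f h2f d12 hX₁ hX₂ (dW d1Y d1Z1 d1Z2) (dW d2Y d2Z1 d2Z2)
  have nAC : (A ∪ C).ncard = W.ncard + 4 := by
    rw [hACeq]; exact ncardP _ _ h1f h3f d13 hX₁ hX₃ (dW d1Y d1Z1 d1Z2) (dW d3Y d3Z1 d3Z2)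
  have nAD : (A ∪ D).ncard = W.ncard + 4 := by
    rw [hADeq]; exact ncardP _ _ h1f h4f d14 hX₁ hX₄ (dW d1Y d1Z1 d1Z2) (dW d4Y d4Z1 d4Z2)
  have nBC : (B ∪ C).ncard = W.ncard + 4 := by
    rw [hBCeq]; exact ncardP _ _ h2f h3f d23 hX₂ hX₃ (dW d2Y d2Z1 d2Z2) (dW d3Y d3Z1 d3Z2)
  have nBD : (B ∪ D).ncard = W.ncard + 4 := by
    rw [hBDeq]; exact ncardP _ _ h2f h4f d24 hX₂ hX₄ (dW d2Y d2Z1 d2Z2) (dW d4Y d4Z1 d4Z2)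
  -- ranks of the five circuit-hyperplanes
  have rkCH : ∀ {U : Set α}, M.IsCircuitHyperplane U → U.ncard = W.ncard + 4 →
      M.rankN U = W.ncard + 3 := by
    intro U hU hUn
    have hUfin : U.Finite := hE.subset hU.1.1
    have hne : U.Nonempty := by
      rw [Set.nonempty_iff_ne_empty]; rintro rfl; simp at hUn
    rw [rankN_eq_of_circuit hU.1 hUfin hne, hUn]
    omega
  -- ranks of A and B: proper subsets of the circuit A ∪ B, hence independent
  have hAssub : A ⊂ A ∪ B := by
    refine ssubset_of_subset_of_ne subset_union_left (fun h => ?_)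
    obtain ⟨x, hx⟩ : X₂.Nonempty := by
      rw [Set.nonempty_iff_ne_empty]; rintro rfl; simp at hX₂
    have hxB : x ∈ A ∪ B := Or.inr (hBeq ▸ Or.inl hx)
    rw [← h, hAeq] at hxB
    rcases hxB with h1 | h2
    · exact d12.symm.ne_of_mem hx h1 rfl
    · exact (dW d2Y d2Z1 d2Z2).ne_of_mem hx h2 rfl
  have hBssub : B ⊂ A ∪ B := by
    refine ssubset_of_subset_of_ne subset_union_right (fun h => ?_)
    obtain ⟨x, hx⟩ : X₁.Nonempty := by
      rw [Set.nonempty_iff_ne_empty]; rintro rfl; simp at hX₁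
    have hxA : x ∈ A ∪ B := Or.inl (hAeq ▸ Or.inl hx)
    rw [← h, hBeq] at hxA
    rcases hxA with h1 | h2
    · exact d12.ne_of_mem hx h1 rfl
    · exact (dW d1Y d1Z1 d1Z2).ne_of_mem hx h2 rfl
  have hAindep : M.Indep A := hAB.1.2.2 _ hAssub
  have hBindep : M.Indep B := hAB.1.2.2 _ hBssub
  have nA : A.ncard = W.ncard + 2 := by
    rw [hAeq, Set.ncard_union_eq (dW d1Y d1Z1 d1Z2) h1f hWfin, hX₁]; omega
  have nB : B.ncard = W.ncard + 2 := by
    rw [hBeq, Set.ncard_union_eq (dW d2Y d2Z1 d2Z2) h2f hWfin, hX₂]; omega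
  have rkA : M.rankN A = W.ncard + 2 := by
    rw [rankN_eq_ncard_of_indep hAindep (hE.subset hAindep.subset_ground), nA]
  have rkB : M.rankN B = W.ncard + 2 := by
    rw [rankN_eq_ncard_of_indep hBindep (hE.subset hBindep.subset_ground), nB]
  -- spanning sets: A ∪ B ∪ C, A ∪ B ∪ D, C ∪ D
  have hsubE : ∀ {S : Set α}, S ⊆ X₁ ∪ X₂ ∪ X₃ ∪ X₄ ∪ Y ∪ Z₁ ∪ Z₂ → S ⊆ M.E :=
    fun h => h.trans hsub
  have hABCsp : M.Spanning (A ∪ B ∪ C) := by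
    refine hAB.2.2.2 _ ?_ ?_
    · refine ssubset_of_subset_of_ne subset_union_left (fun h => ?_)
      obtain ⟨x, hx⟩ : X₃.Nonempty := by
        rw [Set.nonempty_iff_ne_empty]; rintro rfl; simp at hX₃
      have hxC : x ∈ A ∪ B ∪ C := Or.inr (hC ▸ Or.inl (Or.inl hx))
      rw [← h, hABeq] at hxC
      rcases hxC with (h1 | h2) | h3
      · exact d13.symm.ne_of_mem hx h1 rfl
      · exact d23.symm.ne_of_mem hx h2 rfl
      · exact (dW d3Y d3Z1 d3Z2).ne_of_mem hx h3 rfl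
    · refine hsubE (fun x hx => ?_)
      rw [hAeq, hBeq, hC, hW] at hx
      simp at hx ⊢; tauto
  have hABDsp : M.Spanning (A ∪ B ∪ D) := by
    refine hAB.2.2.2 _ ?_ ?_
    · refine ssubset_of_subset_of_ne subset_union_left (fun h => ?_)
      obtain ⟨x, hx⟩ : X₄.Nonempty := by
        rw [Set.nonempty_iff_ne_empty]; rintro rfl; simp at hX₄
      have hxD : x ∈ A ∪ B ∪ D := Or.inr (hD ▸ Or.inl (Or.inl hx))
      rw [← h, hABeq] at hxD
      rcases hxD with (h1 | h2) | h3
      · exact d14.symm.ne_of_mem hx h1 rfl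
      · exact d24.symm.ne_of_mem hx h2 rfl
      · exact (dW d4Y d4Z1 d4Z2).ne_of_mem hx h3 rfl
    · refine hsubE (fun x hx => ?_)
      rw [hAeq, hBeq, hD, hW] at hx
      simp at hx ⊢; tauto
  have rkABC : M.rankN (A ∪ B ∪ C) = r := rankN_eq_of_spanning hr hABCsp
  have rkABD : M.rankN (A ∪ B ∪ D) = r := rankN_eq_of_spanning hr hABDsp
  have rkCD : M.rankN (C ∪ D) = r := rankN_eq_of_spanning hr hCD.spanning
  -- conclude
  intro hq
  unfold Matroid.IngletonQuad at hq
  rw [rkA, rkB, rkABC, rkABD, rkCD, rkCH hAB nAB, rkCH hAC nAC, rkCH hAD nAD,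
    rkCH hBC nBC, rkCH hBD nBD] at hq
  omega
end

section
/- Let $M$ be a matroid in which some element $e$ lies in no nonbasis and $e$ is not a coloop. Then $M$ is the free extension of $M \setminus e$ by $e$; i.e., a set $I \subseteq E(M)$ is independent in $M$ iff either $e \notin I$ and $I$ is independent in $M \setminus e$, or $e \in I$, $|I| \le r(M)$, and $I \setminus \{e\}$ is independent in $M \setminus e$. -/
open Set

/-- If an element `e` of a rank-`r` matroid `M` lies in no nonbasis and is not a coloop,
then `M` is the free extension of `M \ e` by `e`: a set `I ⊆ E(M)` is independent in `M`
iff either `e ∉ I` and `I` is independent in `M \ e`, or `e ∈ I`, `|I| ≤ r(M)`, and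
`I \ {e}` is independent in `M \ e`. -/
theorem free_extension_of_no_nonbasis {α : Type*}
    (M : Matroid α) [M.Finite] (r : ℕ) (hr : ∀ B, M.IsBase B → B.ncard = r)
    (e : α) (he : e ∈ M.E)
    (hnb : ∀ X : Set α, M.IsNonbasis r X → e ∉ X)
    (hcoloop : ¬ ∀ B, M.IsBase B → e ∈ B) :
    ∀ I : Set α, I ⊆ M.E →
      (M.Indep I ↔
        (e ∉ I ∧ (M.restrict (M.E \ {e})).Indep I) ∨
        (e ∈ I ∧ I.ncard ≤ r ∧ (M.restrict (M.E \ {e})).Indep (I \ {e}))) := by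
  intro I hIE
  simp only [Matroid.restrict_indep_iff]
  constructor
  · intro hI
    by_cases heI : e ∈ I
    · right
      obtain ⟨B, hB, hIB⟩ := hI.exists_isBase_superset
      refine ⟨heI, ?_, hI.diff _, fun x hx => ⟨hIE hx.1, hx.2⟩⟩
      rw [← hr B hB]
      exact Set.ncard_le_ncard hIB (M.set_finite B hB.subset_ground)
    · exact Or.inl ⟨heI, hI, fun x hx => ⟨hIE hx, fun h => heI (h ▸ hx)⟩⟩
  · rintro (⟨heI, hI, -⟩ | ⟨heI, hcard, hI, hIe⟩)
    · exact hI
    · push_neg at hcoloop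
      obtain ⟨B0, hB0, heB0⟩ := hcoloop
      obtain ⟨B, hB, hIB, hsub⟩ := hI.exists_isBase_subset_union_isBase hB0
      have heB : e ∉ B := by
        intro h
        rcases hsub h with h' | h'
        · exact h'.2 rfl
        · exact heB0 h'
      have hIfin : I.Finite := M.set_finite I hIE
      have hcard' : (I \ {e}).ncard ≤ r - 1 := by
        have : (I \ {e}).ncard = I.ncard - 1 := by
          rw [Set.ncard_diff_singleton_of_mem heI]
        omega
      have hrB : B.ncard = r := hr B hB
      have hr1 : 1 ≤ r := by
        have : 0 < I.ncard := (Set.ncard_pos hIfin).2 ⟨e, heI⟩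
        omega
      obtain ⟨J, hIJ, hJB, hJcard⟩ := Set.exists_subsuperset_card_eq hIB hcard' (by omega)
      have heJ : e ∉ J := fun h => heB (hJB h)
      have hJe : insert e J ⊆ M.E := insert_subset he (hJB.trans hB.subset_ground)
      have hJecard : (insert e J).ncard = r := by
        rw [Set.ncard_insert_of_notMem heJ (M.set_finite J (hJB.trans hB.subset_ground))]
        omega
      have hbase : M.IsBase (insert e J) := by
        by_contra h
        exact hnb _ ⟨hJe, hJecard, h⟩ (mem_insert e J)
      refine hbase.indep.subset fun x hx => ?_
      rcases eq_or_ne x e with rfl | hxe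
      · exact mem_insert _ _
      · exact Or.inr (hIJ ⟨hx, hxe⟩)
end

section
/- Let $M$ be a rank-$r$ matroid with at most four nonbases such that no element of $E(M)$ lies in four nonbases, and suppose $M$ has a dependent set $Y$ with $|Y| = r - 1$. Then $|E(M)| \le r + 2$. -/
open Set

/-- A rank-`r` matroid with at most four nonbases, in which no element lies in four
nonbases, that has a dependent set of size `r - 1`, has at most `r + 2` elements. -/
theorem ground_small_of_dependent_set {α : Type*}
    (M : Matroid α) [M.Finite] (r : ℕ) (hr : ∀ B, M.IsBase B → B.ncard = r)
    (h4 : {X : Set α | M.IsNonbasis r X}.ncard ≤ 4)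
    (h3 : ∀ e ∈ M.E, {X : Set α | M.IsNonbasis r X ∧ e ∈ X}.ncard < 4)
    (Y : Set α) (hYE : Y ⊆ M.E) (hYdep : ¬ M.Indep Y) (hYcard : Y.ncard + 1 = r) :
    M.E.ncard ≤ r + 2 := by
  have hEfin : M.E.Finite := M.ground_finite
  have hYfin : Y.Finite := hEfin.subset hYE
  have hYne : Y.Nonempty := by
    rcases Y.eq_empty_or_nonempty with h | h
    · exact absurd (h ▸ M.empty_indep) hYdep
    · exact h
  obtain ⟨y, hy⟩ := hYne
  set S := {X : Set α | M.IsNonbasis r X ∧ y ∈ X} with hS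
  have hSfin : S.Finite := hEfin.finite_subsets.subset (fun X hX => hX.1.1)
  have himg : (fun e => insert e Y) '' (M.E \ Y) ⊆ S := by
    rintro _ ⟨e, he, rfl⟩
    refine ⟨⟨Set.insert_subset he.1 hYE, ?_, ?_⟩, Set.mem_insert_of_mem _ hy⟩
    · rw [Set.ncard_insert_of_notMem he.2 hYfin]; exact hYcard
    · intro hB
      exact hYdep (hB.indep.subset (Set.subset_insert _ _))
  have hinj : Set.InjOn (fun e => insert e Y) (M.E \ Y) := by
    intro a ha b hb hab
    simp only at hab
    have : a ∈ insert b Y := hab ▸ Set.mem_insert a Y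
    rcases this with h | h
    · exact h
    · exact absurd h ha.2
  have h1 : (M.E \ Y).ncard ≤ S.ncard := by
    rw [← Set.ncard_image_of_injOn hinj]
    exact Set.ncard_le_ncard himg hSfin
  have h2 : S.ncard < 4 := h3 y (hYE hy)
  have h5 : (M.E \ Y).ncard + Y.ncard = M.E.ncard :=
    Set.ncard_diff_add_ncard_of_subset hYE hEfin
  omega
end
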